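/- Let m ≥ 2 and suppose there are exactly r primes. Then for every positive integer N, N ≤ m^r + N·(∑_{n=1}^∞ 1/n^m − 1). -/

import Mathlib

open Finset

theorem stmt_5 (m r : ℕ) (hm : 2 ≤ m) (p : Fin r → ℕ) (hp : ∀ i, (p i).Prime)
    (hall : ∀ q : ℕ, q.Prime → ∃ i, q = p i) (N : ℕ) (hN : 0 < N) :
    (N : ℝ) ≤ (m : ℝ) ^ r + (N : ℝ) * ((∑' n : ℕ, 1 / ((n : ℝ) + 1) ^ m) - 1) := by
  have hm0 : 0 < m := by omega
  set S := (Finset.Ioc 0 N).filter (fun t => ∀ i, ¬ p i ^ m ∣ t) with hSdef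
  set T := (Finset.Ioc 0 N).filter (fun t => ∃ i, p i ^ m ∣ t) with hTdef
  -- split
  have hsplit : N = S.card + T.card := by
    have hTeq : T = (Finset.Ioc 0 N).filter (fun a => ¬ ∀ i, ¬ p i ^ m ∣ a) := by
      rw [hTdef]
      apply Finset.filter_congr
      intro t _
      simp only [not_forall, not_not]
    have h := Finset.card_filter_add_card_filter_not
      (s := Finset.Ioc 0 N) (p := fun t => ∀ i, ¬ p i ^ m ∣ t)
    rw [Nat.card_Ioc, Nat.sub_zero] at h
    rw [hTeq, hSdef]
    exact h.symm
  -- S card bound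
  have hScard : S.card ≤ m ^ r := by
    have h2 : S.card ≤ (Finset.univ : Finset (Fin r → Fin m)).card := by
      apply Finset.card_le_card_of_injOn
        (fun t i => (⟨t.factorization (p i) % m, Nat.mod_lt _ hm0⟩ : Fin m))
      · intro a _; exact Finset.mem_univ _
      · intro a ha b hb hab
        simp only [hSdef, Finset.mem_coe, Finset.mem_filter, Finset.mem_Ioc] at ha hb
        have ha0 : a ≠ 0 := by omega
        have hb0 : b ≠ 0 := by omega
        have hlt : ∀ i, a.factorization (p i) < m := fun i => by
          by_contra h
          exact ha.2 i (((hp i).pow_dvd_iff_le_factorization ha0).2 (by omega))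
        have hlt' : ∀ i, b.factorization (p i) < m := fun i => by
          by_contra h
          exact hb.2 i (((hp i).pow_dvd_iff_le_factorization hb0).2 (by omega))
        have hfac : a.factorization = b.factorization := by
          ext q
          by_cases hq : q.Prime
          · obtain ⟨i, rfl⟩ := hall q hq
            have := congrFun hab i
            simp only [Fin.mk.injEq] at this
            rw [Nat.mod_eq_of_lt (hlt i), Nat.mod_eq_of_lt (hlt' i)] at this
            exact this
          · rw [Nat.factorization_eq_zero_of_not_prime _ hq,
              Nat.factorization_eq_zero_of_not_prime _ hq]
        exact Nat.factorization_inj ha0 hb0 hfac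
    simpa [Fintype.card_fun] using h2
  -- T card bound
  set P := Finset.image p Finset.univ with hPdef
  have hTcard : (T.card : ℝ) ≤ ∑ q ∈ P, (N : ℝ) / (q : ℝ) ^ m := by
    have hsub : T ⊆ P.biUnion (fun q => (Finset.Ioc 0 N).filter (fun t => q ^ m ∣ t)) := by
      intro t ht
      simp only [hTdef, Finset.mem_filter] at ht
      obtain ⟨htI, i, hi⟩ := ht
      exact Finset.mem_biUnion.2 ⟨p i, Finset.mem_image.2 ⟨i, Finset.mem_univ _, rfl⟩,
        Finset.mem_filter.2 ⟨htI, hi⟩⟩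
    calc (T.card : ℝ) ≤ ((P.biUnion (fun q => (Finset.Ioc 0 N).filter (fun t => q ^ m ∣ t))).card : ℝ) := by
          exact_mod_cast Finset.card_le_card hsub
      _ ≤ ∑ q ∈ P, (((Finset.Ioc 0 N).filter (fun t => q ^ m ∣ t)).card : ℝ) := by
          exact_mod_cast Finset.card_biUnion_le
      _ ≤ ∑ q ∈ P, (N : ℝ) / (q : ℝ) ^ m := by
          apply Finset.sum_le_sum
          intro q hq
          rw [Nat.Ioc_filter_dvd_card_eq_div]
          calc ((N / q ^ m : ℕ) : ℝ) ≤ (N : ℝ) / ((q ^ m : ℕ) : ℝ) := Nat.cast_div_le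
            _ = (N : ℝ) / (q : ℝ) ^ m := by push_cast; ring
  -- sum over primes bound
  have hsummable : Summable (fun n : ℕ => 1 / ((n : ℝ) + 1) ^ m) := by
    have := Real.summable_one_div_nat_pow.2 hm
    have h := (summable_nat_add_iff 1).2 this
    convert h using 2 with n
    · rfl
    push_cast
    ring
  have hsummable2 : Summable (fun n : ℕ => 1 / ((n : ℝ) + 2) ^ m) := by
    have h := (summable_nat_add_iff 1).2 hsummable
    convert h using 2 with n
    · rfl
    push_cast
    ring
  have htail : (∑' n : ℕ, 1 / ((n : ℝ) + 1) ^ m) - 1 = ∑' n : ℕ, 1 / ((n : ℝ) + 2) ^ m := by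
    have heq : (fun n : ℕ => 1 / (((n + 1 : ℕ) : ℝ) + 1) ^ m) = fun n : ℕ => 1 / ((n : ℝ) + 2) ^ m := by
      funext n; push_cast; ring
    rw [Summable.tsum_eq_zero_add hsummable, heq]
    norm_num
  have hPsum : ∑ q ∈ P, (1 : ℝ) / (q : ℝ) ^ m ≤ ∑' n : ℕ, 1 / ((n : ℝ) + 2) ^ m := by
    have hge : ∀ q ∈ P, 2 ≤ q := by
      intro q hq
      obtain ⟨i, _, rfl⟩ := Finset.mem_image.1 hq
      exact (hp i).two_le
    have hinj : ∀ x ∈ P, ∀ y ∈ P, x - 2 = y - 2 → x = y := by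
      intro x hx y hy h
      have h2x := hge x hx; have h2y := hge y hy
      omega
    have himg := Finset.sum_image (g := fun q : ℕ => q - 2) (s := P)
      (f := fun k : ℕ => (1 : ℝ) / ((k : ℝ) + 2) ^ m) hinj
    have heq : ∑ q ∈ P, (1 : ℝ) / (q : ℝ) ^ m
        = ∑ k ∈ P.image (fun q : ℕ => q - 2), (1 : ℝ) / ((k : ℝ) + 2) ^ m := by
      rw [himg]
      apply Finset.sum_congr rfl
      intro q hq
      have h2 := hge q hq
      show (1 : ℝ) / (q : ℝ) ^ m = 1 / (((q - 2 : ℕ) : ℝ) + 2) ^ m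
      rw [Nat.cast_sub h2]
      norm_num
    rw [heq]
    exact Summable.sum_le_tsum _ (fun n _ => by positivity) hsummable2
  -- assemble
  rw [htail]
  have h1 : (N : ℝ) = (S.card : ℝ) + (T.card : ℝ) := by exact_mod_cast hsplit
  have h2 : (S.card : ℝ) ≤ (m : ℝ) ^ r := by exact_mod_cast hScard
  have h3 : (T.card : ℝ) ≤ (N : ℝ) * ∑' n : ℕ, 1 / ((n : ℝ) + 2) ^ m := by
    calc (T.card : ℝ) ≤ ∑ q ∈ P, (N : ℝ) / (q : ℝ) ^ m := hTcard
      _ = (N : ℝ) * ∑ q ∈ P, (1 : ℝ) / (q : ℝ) ^ m := by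
          rw [Finset.mul_sum]; apply Finset.sum_congr rfl; intros; ring
      _ ≤ (N : ℝ) * ∑' n : ℕ, 1 / ((n : ℝ) + 2) ^ m := by
          apply mul_le_mul_of_nonneg_left hPsum (by positivity)
  linarith
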